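/- arXiv:1604.03284 — 2 statements merged into one kernel-verified Lean document; each statement's English description precedes it below -/
import Mathlib

section
/- Fix α ∈ (0,1). There exists a constant C = C(α) > 0 such that for every measurable function θ : ℝ² → [0,∞) with finite moment of inertia i₀ = ∫_{ℝ²} |y|² θ(y) dy and every x ∈ ℝ² with x ≠ 0, | ∫_{{y : |x−y| ≥ |x|/2}} (x·y^⊥ / |x|) ( |x−y|^{−(2+α)} − |x|^{−(2+α)} ) θ(y) dy | ≤ C i₀ / |x|^{3+α}. -/
open MeasureTheory Real Set
open scoped RealInnerProductSpace

noncomputable section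

/-- The plane `ℝ²` with the Euclidean norm. -/
abbrev R2 := EuclideanSpace ℝ (Fin 2)

/-- The rotation by `π/2`: `y^⊥ = (-y₂, y₁)`. -/
def perp (y : R2) : R2 := (WithLp.equiv 2 (Fin 2 → ℝ)).symm ![-y 1, y 0]

lemma norm_perp (y : R2) : ‖perp y‖ = ‖y‖ := by
  rw [EuclideanSpace.norm_eq, EuclideanSpace.norm_eq]
  congr 1
  simp [perp, Fin.sum_univ_two, WithLp.equiv_symm_apply, PiLp.toLp_apply]
  ring

lemma key_mvt (α s r : ℝ) (hα : 0 < α) (hs : 0 < s) (hr : s / 2 ≤ r) :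
    |r ^ (-(2 + α)) - s ^ (-(2 + α))| ≤ (2 + α) * (s / 2) ^ (-(3 + α)) * |r - s| := by
  have h2 : (0:ℝ) < s / 2 := by linarith
  have hderiv : ∀ t ∈ Set.Ici (s / 2),
      HasDerivWithinAt (fun t : ℝ => t ^ (-(2 + α)))
        ((-(2 + α)) * t ^ (-(2 + α) - 1)) (Set.Ici (s / 2)) t := by
    intro t ht
    exact (Real.hasDerivAt_rpow_const (Or.inl (by simp at ht; nlinarith))).hasDerivWithinAt
  have hbound : ∀ t ∈ Set.Ici (s / 2),
      ‖(-(2 + α)) * t ^ (-(2 + α) - 1)‖ ≤ (2 + α) * (s / 2) ^ (-(3 + α)) := by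
    intro t ht
    simp only [Set.mem_Ici] at ht
    have ht0 : 0 < t := lt_of_lt_of_le h2 ht
    rw [norm_mul, Real.norm_eq_abs, Real.norm_eq_abs, abs_of_nonneg (Real.rpow_nonneg ht0.le _),
      abs_neg, abs_of_nonneg (by linarith)]
    have : -(2 + α) - 1 = -(3 + α) := by ring
    rw [this]
    exact mul_le_mul_of_nonneg_left (Real.rpow_le_rpow_of_nonpos h2 ht (by linarith)) (by linarith)
  have := Convex.norm_image_sub_le_of_norm_hasDerivWithin_le hderiv hbound (convex_Ici _)
    (by simp [Set.mem_Ici]; linarith : s ∈ Set.Ici (s / 2)) (Set.mem_Ici.mpr hr)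
  simpa [Real.norm_eq_abs] using this

/-- There is a constant `C = C(α) > 0` such that for every nonnegative measurable `θ` with
finite moment of inertia `i₀ = ∫ |y|² θ(y) dy` and every `x ≠ 0`,
`| ∫_{|x-y| ≥ |x|/2} (x·y^⊥/|x|) (|x-y|^{-(2+α)} - |x|^{-(2+α)}) θ(y) dy | ≤ C i₀ / |x|^{3+α}`. -/
theorem far_field_integral_bound (α : ℝ) (hα : α ∈ Set.Ioo (0 : ℝ) 1) :
    ∃ C : ℝ, 0 < C ∧ ∀ θ : R2 → ℝ, Measurable θ → (∀ y, 0 ≤ θ y) →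
      Integrable (fun y => ‖y‖ ^ 2 * θ y) →
      ∀ x : R2, x ≠ 0 →
        |∫ y in {y : R2 | ‖x‖ / 2 ≤ ‖x - y‖},
            (⟪x, perp y⟫ / ‖x‖) * (‖x - y‖ ^ (-(2 + α)) - ‖x‖ ^ (-(2 + α))) * θ y| ≤
          C * (∫ y, ‖y‖ ^ 2 * θ y) / ‖x‖ ^ (3 + α) := by
  obtain ⟨hα0, hα1⟩ := hα
  refine ⟨48, by norm_num, fun θ hθm hθ0 hint x hx => ?_⟩
  set s := ‖x‖ with hs_def
  have hs : 0 < s := norm_pos_iff.mpr hx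
  have hspow : 0 < s ^ (3 + α) := Real.rpow_pos_of_pos hs _
  set S : Set R2 := {y : R2 | s / 2 ≤ ‖x - y‖} with hS_def
  set f : R2 → ℝ := fun y =>
    (⟪x, perp y⟫ / s) * (‖x - y‖ ^ (-(2 + α)) - s ^ (-(2 + α))) * θ y with hf_def
  set g : R2 → ℝ := fun y => 48 / s ^ (3 + α) * (‖y‖ ^ 2 * θ y) with hg_def
  have hg_int : Integrable g := hint.const_mul _
  -- pointwise bound on S
  have hpt : ∀ y ∈ S, |f y| ≤ g y := by
    intro y hy
    have hy' : s / 2 ≤ ‖x - y‖ := hy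
    have h1 : |⟪x, perp y⟫ / s| ≤ ‖y‖ := by
      rw [abs_div, abs_of_pos hs, div_le_iff₀ hs]
      calc |⟪x, perp y⟫| ≤ ‖x‖ * ‖perp y‖ := abs_real_inner_le_norm _ _
        _ = ‖y‖ * s := by rw [norm_perp]; ring
    have h2 : |‖x - y‖ ^ (-(2 + α)) - s ^ (-(2 + α))|
        ≤ (2 + α) * (s / 2) ^ (-(3 + α)) * ‖y‖ := by
      refine (key_mvt α s ‖x - y‖ hα0 hs hy').trans ?_
      have hab : |‖x - y‖ - s| ≤ ‖y‖ := by
        calc |‖x - y‖ - s| ≤ ‖x - y - x‖ := abs_norm_sub_norm_le _ _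
          _ = ‖y‖ := by rw [sub_sub_cancel_left, norm_neg]
      exact mul_le_mul_of_nonneg_left hab (by positivity)
    have hcoef : (2 + α) * (s / 2) ^ (-(3 + α)) ≤ 48 / s ^ (3 + α) := by
      rw [Real.rpow_neg (by positivity), Real.div_rpow hs.le (by norm_num : (0:ℝ) ≤ 2),
        inv_div, mul_div_assoc']
      gcongr
      have h24 : (2:ℝ) ^ (3 + α) ≤ 16 := by
        calc (2:ℝ) ^ (3 + α) ≤ 2 ^ (4:ℝ) :=
          Real.rpow_le_rpow_of_exponent_le (by norm_num) (by linarith)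
        _ = 16 := by
          rw [show (4:ℝ) = ((4:ℕ):ℝ) by norm_num, Real.rpow_natCast]; norm_num
      nlinarith
    have hnn : 0 ≤ θ y := hθ0 y
    calc |f y| = |⟪x, perp y⟫ / s| * |‖x - y‖ ^ (-(2 + α)) - s ^ (-(2 + α))| * θ y := by
          rw [hf_def]; rw [abs_mul, abs_mul, abs_of_nonneg hnn]
      _ ≤ ‖y‖ * ((2 + α) * (s / 2) ^ (-(3 + α)) * ‖y‖) * θ y := by
          apply mul_le_mul_of_nonneg_right _ hnn
          exact mul_le_mul h1 h2 (abs_nonneg _) (norm_nonneg _)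
      _ = ((2 + α) * (s / 2) ^ (-(3 + α))) * (‖y‖ ^ 2 * θ y) := by ring
      _ ≤ 48 / s ^ (3 + α) * (‖y‖ ^ 2 * θ y) := by
          have : 0 ≤ ‖y‖ ^ 2 * θ y := by positivity
          exact mul_le_mul_of_nonneg_right hcoef this
  have hSmeas : MeasurableSet S := by
    apply measurableSet_le measurable_const
    exact (measurable_const.sub measurable_id).norm
  have step1 : |∫ y in S, f y| ≤ ∫ y in S, |f y| := by
    simpa [Real.norm_eq_abs] using
      norm_integral_le_integral_norm (μ := volume.restrict S) f
  have step2 : ∫ y in S, |f y| ≤ ∫ y in S, g y := by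
    apply integral_mono_of_nonneg
    · exact Filter.Eventually.of_forall fun y => abs_nonneg _
    · exact hg_int.restrict
    · exact (ae_restrict_iff' hSmeas).mpr (Filter.Eventually.of_forall hpt)
  have step3 : ∫ y in S, g y ≤ ∫ y, g y := by
    apply setIntegral_le_integral hg_int
    exact Filter.Eventually.of_forall fun y => by
      have := hθ0 y
      simp only [hg_def]
      positivity
  have : ∫ y, g y = 48 * (∫ y, ‖y‖ ^ 2 * θ y) / s ^ (3 + α) := by
    rw [hg_def, integral_const_mul]
    ring
  linarith [step1, step2, step3, this ▸ step3]
end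
end

section
/- Fix α ∈ (0,1). There exists a constant C = C(α) > 0 such that for every measurable function θ : ℝ² → [0,∞) in L¹(ℝ²) ∩ L^∞(ℝ²) with M₀ = ‖θ‖_{L^∞}, and every x ∈ ℝ² with x ≠ 0, ∫_{{y : |x−y| < |x|/2}} θ(y) |x−y|^{−(1+α)} dy ≤ C M₀^{(1+α)/2} ( ∫_{{y : |y| > |x|/2}} θ(y) dy )^{(1−α)/2}. -/
open MeasureTheory Real Set
open scoped ENNReal

noncomputable section

lemma R2_volume_closedBall (x : R2) (ρ : ℝ) (hρ : 0 ≤ ρ) :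
    volume (Metric.closedBall x ρ) = ENNReal.ofReal (π * ρ ^ 2) := by
  rw [EuclideanSpace.volume_closedBall]
  rw [Fintype.card_fin]
  norm_num [Real.Gamma_two, Real.sq_sqrt Real.pi_nonneg,
    ← ENNReal.ofReal_pow hρ, ← ENNReal.ofReal_mul (by positivity : (0:ℝ) ≤ ρ ^ 2)]
  ring_nf

lemma term_eq {α r : ℝ} (hr : 0 < r) (k : ℕ) :
    (r * (2⁻¹:ℝ) ^ (k+1)) ^ (-(1+α)) * (π * (r * (2⁻¹:ℝ) ^ k) ^ 2)
      = π * 2 ^ (1+α) * r ^ (1-α) * ((2⁻¹:ℝ) ^ (1-α)) ^ k := by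
  have hu : (0:ℝ) < 2⁻¹ := by norm_num
  have e1 : ((2⁻¹:ℝ) ^ (k+1)) ^ (-(1+α)) = (2⁻¹:ℝ) ^ (((k:ℝ)+1) * (-(1+α))) := by
    rw [← Real.rpow_natCast (2⁻¹:ℝ) (k+1), ← Real.rpow_mul hu.le]; push_cast; ring_nf
  have e2 : ((2⁻¹:ℝ) ^ k) ^ 2 = (2⁻¹:ℝ) ^ ((k:ℝ) * 2) := by
    rw [← Real.rpow_natCast (2⁻¹:ℝ) k, ← Real.rpow_natCast ((2⁻¹:ℝ) ^ ((k:ℝ))) 2,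
      ← Real.rpow_mul hu.le]; norm_num
  have e3 : ((2⁻¹:ℝ) ^ (1-α)) ^ k = (2⁻¹:ℝ) ^ ((1-α) * (k:ℝ)) := by
    rw [← Real.rpow_natCast ((2⁻¹:ℝ) ^ (1-α)) k, ← Real.rpow_mul hu.le]
  have e4 : (2:ℝ) ^ (1+α) = (2⁻¹:ℝ) ^ (-(1+α)) := by
    rw [Real.inv_rpow (by norm_num), ← Real.rpow_neg (by norm_num), neg_neg]
  have e5 : r ^ 2 = r ^ (2:ℝ) := by
    rw [← Real.rpow_natCast r 2]; norm_num
  rw [mul_rpow hr.le (by positivity), e1, mul_pow, e2, e3, e4, e5]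
  rw [show r ^ (-(1+α)) * ((2⁻¹:ℝ) ^ (((k:ℝ)+1) * (-(1+α)))) * (π * (r ^ (2:ℝ) * (2⁻¹:ℝ) ^ ((k:ℝ)*2)))
      = π * (r ^ (-(1+α)) * r ^ (2:ℝ)) * ((2⁻¹:ℝ) ^ (((k:ℝ)+1) * (-(1+α))) * (2⁻¹:ℝ) ^ ((k:ℝ)*2)) from by ring]
  rw [← Real.rpow_add hr, ← Real.rpow_add hu,
    show (-(1+α) + 2 : ℝ) = 1 - α by ring,
    show (((k:ℝ)+1) * (-(1+α)) + (k:ℝ)*2 : ℝ) = -(1+α) + (1-α) * (k:ℝ) by ring,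
    Real.rpow_add hu]
  ring

lemma kernel_ball_lintegral {α : ℝ} (hα0 : 0 < α) (hα1 : α < 1) (x : R2) {r : ℝ} (hr : 0 < r) :
    ∫⁻ y in Metric.ball x r, ENNReal.ofReal (‖x - y‖ ^ (-(1+α))) ≤
      ENNReal.ofReal (π * 2 ^ (1+α) / (1 - (2⁻¹:ℝ) ^ (1-α)) * r ^ (1-α)) := by
  have hq0 : 0 < (2⁻¹:ℝ) ^ (1-α) := Real.rpow_pos_of_pos (by norm_num) _
  have hq1 : (2⁻¹:ℝ) ^ (1-α) < 1 :=
    Real.rpow_lt_one (by norm_num) (by norm_num) (by linarith)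
  set ρ : ℕ → ℝ := fun k => r * (2⁻¹:ℝ) ^ k with hρdef
  have hρ0 : ∀ k, 0 < ρ k := fun k => by positivity
  set A : ℕ → Set R2 := fun k => Metric.closedBall x (ρ k) \ Metric.ball x (ρ (k+1)) with hAdef
  have hcov : Metric.ball x r ⊆ {x} ∪ ⋃ k, A k := by
    intro y hy
    rcases eq_or_ne y x with h | h
    · exact Or.inl (by simp [h])
    right
    have hd0 : 0 < dist y x := dist_pos.2 h
    have hdr : dist y x < r := Metric.mem_ball.1 hy
    have hrd1 : 1 < r / dist y x := (one_lt_div hd0).2 hdr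
    set k := ⌊Real.logb 2 (r / dist y x)⌋₊ with hk
    refine mem_iUnion.2 ⟨k, ?_, ?_⟩
    · have h1 : (k:ℝ) ≤ Real.logb 2 (r / dist y x) :=
        Nat.floor_le (Real.logb_nonneg one_lt_two hrd1.le)
      have h2 : (2:ℝ) ^ (k:ℝ) ≤ r / dist y x := by
        calc (2:ℝ) ^ (k:ℝ) ≤ (2:ℝ) ^ Real.logb 2 (r / dist y x) :=
          Real.rpow_le_rpow_of_exponent_le one_le_two h1
        _ = r / dist y x := Real.rpow_logb (by positivity) (by norm_num) (by positivity)
      rw [Real.rpow_natCast] at h2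
      rw [le_div_iff₀ hd0] at h2
      have hp : (0:ℝ) < 2 ^ k := by positivity
      show dist y x ≤ r * (2⁻¹:ℝ) ^ k
      rw [inv_pow, ← div_eq_mul_inv, le_div_iff₀ hp]
      linarith
    · have h1 : Real.logb 2 (r / dist y x) < (k:ℝ) + 1 := Nat.lt_floor_add_one _
      have h2 : r / dist y x < (2:ℝ) ^ ((k:ℝ) + 1) := by
        calc r / dist y x = (2:ℝ) ^ Real.logb 2 (r / dist y x) :=
          (Real.rpow_logb (by positivity) (by norm_num) (by positivity)).symm
        _ < (2:ℝ) ^ ((k:ℝ)+1) := Real.rpow_lt_rpow_of_exponent_lt one_lt_two h1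
      have h3 : ((k:ℝ) + 1) = ((k+1 : ℕ) : ℝ) := by push_cast; ring
      rw [h3, Real.rpow_natCast, div_lt_iff₀ hd0] at h2
      have hp : (0:ℝ) < 2 ^ (k+1) := by positivity
      simp only [A, Set.mem_setOf_eq, Metric.mem_ball, not_lt]
      show r * (2⁻¹:ℝ) ^ (k+1) ≤ dist y x
      rw [inv_pow, ← div_eq_mul_inv, div_le_iff₀ hp]
      linarith
  have hshell : ∀ k, ∫⁻ y in A k, ENNReal.ofReal (‖x - y‖ ^ (-(1+α))) ≤
      ENNReal.ofReal (π * 2^(1+α) * r^(1-α) * ((2⁻¹:ℝ)^(1-α))^k) := by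
    intro k
    have hb : ∀ y ∈ A k, ENNReal.ofReal (‖x - y‖ ^ (-(1+α))) ≤
        ENNReal.ofReal (ρ (k+1) ^ (-(1+α))) := by
      intro y hy
      have h1 : ρ (k+1) ≤ dist y x := by
        have h2 := hy.2
        rw [Metric.mem_ball, not_lt] at h2
        exact h2
      have h2 : ‖x - y‖ = dist y x := by rw [dist_eq_norm, norm_sub_rev]
      apply ENNReal.ofReal_le_ofReal
      rw [h2]
      exact Real.rpow_le_rpow_of_nonpos (hρ0 _) h1 (by linarith)
    calc ∫⁻ y in A k, ENNReal.ofReal (‖x - y‖ ^ (-(1+α)))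
        ≤ ∫⁻ _ in A k, ENNReal.ofReal (ρ (k+1) ^ (-(1+α))) :=
          setLIntegral_mono measurable_const hb
      _ = ENNReal.ofReal (ρ (k+1) ^ (-(1+α))) * volume (A k) := setLIntegral_const _ _
      _ ≤ ENNReal.ofReal (ρ (k+1) ^ (-(1+α))) * ENNReal.ofReal (π * ρ k ^ 2) := by
          gcongr
          rw [← R2_volume_closedBall x (ρ k) (hρ0 k).le]
          exact measure_mono diff_subset
      _ = ENNReal.ofReal (ρ (k+1) ^ (-(1+α)) * (π * ρ k ^ 2)) :=
          (ENNReal.ofReal_mul (Real.rpow_nonneg (hρ0 _).le _)).symm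
      _ = ENNReal.ofReal (π * 2^(1+α) * r^(1-α) * ((2⁻¹:ℝ)^(1-α))^k) := by
          simp only [hρdef]
          exact congrArg ENNReal.ofReal (term_eq hr k)
  have hsum : ∑' k : ℕ, ENNReal.ofReal (π * 2^(1+α) * r^(1-α) * ((2⁻¹:ℝ)^(1-α))^k)
      = ENNReal.ofReal (π * 2^(1+α) * r^(1-α) * (1 - (2⁻¹:ℝ)^(1-α))⁻¹) := by
    rw [← ENNReal.ofReal_tsum_of_nonneg]
    · congr 1
      rw [tsum_mul_left, tsum_geometric_of_lt_one hq0.le hq1]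
    · intro n
      positivity
    · exact (summable_geometric_of_lt_one hq0.le hq1).mul_left _
  calc ∫⁻ y in Metric.ball x r, ENNReal.ofReal (‖x - y‖ ^ (-(1+α)))
      ≤ ∫⁻ y in ({x} ∪ ⋃ k, A k), ENNReal.ofReal (‖x - y‖ ^ (-(1+α))) :=
        lintegral_mono_set hcov
    _ ≤ (∫⁻ y in ({x} : Set R2), ENNReal.ofReal (‖x - y‖ ^ (-(1+α))))
        + ∫⁻ y in (⋃ k, A k), ENNReal.ofReal (‖x - y‖ ^ (-(1+α))) :=
        lintegral_union_le _ _ _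
    _ ≤ 0 + ∑' k : ℕ, ∫⁻ y in A k, ENNReal.ofReal (‖x - y‖ ^ (-(1+α))) :=
        add_le_add (le_of_eq (setLIntegral_measure_zero _ _ (measure_singleton x)))
          (lintegral_iUnion_le _ _)
    _ ≤ 0 + ∑' k : ℕ, ENNReal.ofReal (π * 2^(1+α) * r^(1-α) * ((2⁻¹:ℝ)^(1-α))^k) :=
        add_le_add le_rfl (ENNReal.tsum_le_tsum hshell)
    _ = ENNReal.ofReal (π * 2^(1+α) * r^(1-α) * (1 - (2⁻¹:ℝ)^(1-α))⁻¹) := by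
        rw [zero_add, hsum]
    _ = ENNReal.ofReal (π * 2 ^ (1+α) / (1 - (2⁻¹:ℝ) ^ (1-α)) * r ^ (1-α)) := by
        rw [div_eq_mul_inv]; ring_nf

lemma key_alg {α M₀ I : ℝ} (c0 : ℝ) (hM : 0 < M₀) (hI : 0 < I) :
    M₀ * (c0 * ((I/M₀) ^ ((1:ℝ)/2)) ^ (1-α)) + ((I/M₀) ^ ((1:ℝ)/2)) ^ (-(1+α)) * I
      = (c0+1) * M₀ ^ ((1+α)/2) * I ^ ((1-α)/2) := by
  have hd : 0 < I / M₀ := div_pos hI hM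
  have e1 : ((I/M₀) ^ ((1:ℝ)/2)) ^ (1-α) = (I/M₀) ^ ((1-α)/2) := by
    rw [← Real.rpow_mul hd.le]; ring_nf
  have e2 : ((I/M₀) ^ ((1:ℝ)/2)) ^ (-(1+α)) = (I/M₀) ^ (-((1+α)/2)) := by
    rw [← Real.rpow_mul hd.le]; ring_nf
  have k1 : M₀ * (I/M₀) ^ ((1-α)/2) = M₀ ^ ((1+α)/2) * I ^ ((1-α)/2) := by
    rw [Real.div_rpow hI.le hM.le,
      show M₀ * (I ^ ((1-α)/2) / M₀ ^ ((1-α)/2))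
        = (M₀ ^ (1:ℝ) / M₀ ^ ((1-α)/2)) * I ^ ((1-α)/2) from by rw [Real.rpow_one]; ring,
      ← Real.rpow_sub hM, show (1:ℝ) - (1-α)/2 = (1+α)/2 from by ring]
  have k2 : (I/M₀) ^ (-((1+α)/2)) * I = M₀ ^ ((1+α)/2) * I ^ ((1-α)/2) := by
    rw [Real.rpow_neg hd.le, Real.div_rpow hI.le hM.le, inv_div,
      show M₀ ^ ((1+α)/2) / I ^ ((1+α)/2) * I
        = M₀ ^ ((1+α)/2) * (I ^ (1:ℝ) / I ^ ((1+α)/2)) from by rw [Real.rpow_one]; ring,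
      ← Real.rpow_sub hI, show (1:ℝ) - (1+α)/2 = (1-α)/2 from by ring]
  rw [e1, e2, mul_left_comm M₀ c0, k1, k2]
  ring


/-- There is a constant `C = C(α) > 0` such that for every nonnegative
`θ ∈ L¹ ∩ L^∞(ℝ²)` with `M₀ = ‖θ‖_{L^∞}` and every `x ≠ 0`,
`∫_{|x-y| < |x|/2} θ(y) |x-y|^{-(1+α)} dy ≤ C M₀^{(1+α)/2} (∫_{|y| > |x|/2} θ(y) dy)^{(1-α)/2}`. -/
theorem near_field_integral_bound (α : ℝ) (hα : α ∈ Set.Ioo (0 : ℝ) 1) :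
    ∃ C : ℝ, 0 < C ∧ ∀ θ : R2 → ℝ, Measurable θ → (∀ y, 0 ≤ θ y) →
      Integrable θ → MemLp θ ⊤ →
      ∀ M₀ : ℝ, eLpNorm θ ⊤ volume = ENNReal.ofReal M₀ → 0 ≤ M₀ →
      ∀ x : R2, x ≠ 0 →
        ∫ y in {y : R2 | ‖x - y‖ < ‖x‖ / 2}, θ y * ‖x - y‖ ^ (-(1 + α)) ≤
          C * M₀ ^ ((1 + α) / 2) * (∫ y in {y : R2 | ‖x‖ / 2 < ‖y‖}, θ y) ^ ((1 - α) / 2) := by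
  obtain ⟨hα0, hα1⟩ := hα
  have hq0 : 0 < (2⁻¹:ℝ) ^ (1-α) := Real.rpow_pos_of_pos (by norm_num) _
  have hq1 : (2⁻¹:ℝ) ^ (1-α) < 1 :=
    Real.rpow_lt_one (by norm_num) (by norm_num) (by linarith)
  set c0 : ℝ := π * 2 ^ (1+α) / (1 - (2⁻¹:ℝ) ^ (1-α)) with hc0
  have hc0pos : 0 < c0 := div_pos (by positivity) (by linarith)
  refine ⟨c0 + 1, by linarith, ?_⟩
  intro θ hmeas hpos hint _hmem M₀ hM hM0 x _hx
  set S := {y : R2 | ‖x - y‖ < ‖x‖ / 2} with hSdef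
  set T := {y : R2 | ‖x‖ / 2 < ‖y‖} with hTdef
  have hTmeas : MeasurableSet T := measurableSet_lt measurable_const continuous_norm.measurable
  have hST : S ⊆ T := by
    intro y hy
    simp only [hSdef, Set.mem_setOf_eq] at hy
    simp only [hTdef, Set.mem_setOf_eq]
    have h1 := norm_sub_norm_le x y
    linarith
  set I := ∫ y in T, θ y with hIdef
  have hIθ : IntegrableOn θ T := hint.integrableOn
  have hI0 : 0 ≤ I := setIntegral_nonneg hTmeas fun y _ => hpos y
  have hlintT : ∫⁻ y in T, ENNReal.ofReal (θ y) = ENNReal.ofReal I :=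
    (ofReal_integral_eq_lintegral_ofReal hIθ (ae_of_all _ hpos)).symm
  have hθM : ∀ᵐ y, θ y ≤ M₀ := by
    have h1 := ae_le_eLpNormEssSup (f := θ) (μ := (volume : Measure R2))
    rw [← eLpNorm_exponent_top, hM] at h1
    filter_upwards [h1] with y hy
    have h2 : ENNReal.ofReal (θ y) ≤ ENNReal.ofReal M₀ := by
      rw [show ENNReal.ofReal (θ y) = ‖θ y‖ₑ from by
        rw [← ofReal_norm_eq_enorm, Real.norm_eq_abs, abs_of_nonneg (hpos y)]]
      exact hy
    exact (ENNReal.ofReal_le_ofReal_iff hM0).1 h2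
  have hKmeas : Measurable fun y : R2 => ENNReal.ofReal (‖x - y‖ ^ (-(1+α))) :=
    ((measurable_const.sub measurable_id).norm.pow_const _).ennreal_ofReal
  have hf0 : ∀ y, 0 ≤ θ y * ‖x - y‖ ^ (-(1+α)) :=
    fun y => mul_nonneg (hpos y) (Real.rpow_nonneg (norm_nonneg _) _)
  have hfmeas : Measurable fun y : R2 => θ y * ‖x - y‖ ^ (-(1+α)) :=
    hmeas.mul ((measurable_const.sub measurable_id).norm.pow_const _)
  have hRHS0 : 0 ≤ (c0+1) * M₀ ^ ((1+α)/2) * I ^ ((1-α)/2) := by positivity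
  have main : ∫⁻ y in S, ENNReal.ofReal (θ y * ‖x - y‖ ^ (-(1+α))) ≤
      ENNReal.ofReal ((c0+1) * M₀ ^ ((1+α)/2) * I ^ ((1-α)/2)) := by
    rcases eq_or_lt_of_le hM0 with hM0' | hM0'
    · -- M₀ = 0
      have hz : ∀ᵐ y, θ y = 0 := by
        filter_upwards [hθM] with y hy
        exact le_antisymm (hM0' ▸ hy) (hpos y)
      have hz2 : ∫⁻ y in S, ENNReal.ofReal (θ y * ‖x - y‖ ^ (-(1+α))) = 0 := by
        rw [← lintegral_zero (μ := volume.restrict S)]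
        apply lintegral_congr_ae
        filter_upwards [ae_restrict_of_ae hz] with y hy
        simp [hy]
      rw [hz2]
      exact zero_le
    rcases eq_or_lt_of_le hI0 with hI0' | hI0'
    · -- I = 0
      have hz : θ =ᵐ[volume.restrict T] 0 :=
        (integral_eq_zero_iff_of_nonneg hpos hIθ).1 hI0'.symm
      have hz' : θ =ᵐ[volume.restrict S] 0 :=
        hz.filter_mono (ae_mono (Measure.restrict_mono hST le_rfl))
      have hz2 : ∫⁻ y in S, ENNReal.ofReal (θ y * ‖x - y‖ ^ (-(1+α))) = 0 := by
        rw [← lintegral_zero (μ := volume.restrict S)]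
        apply lintegral_congr_ae
        filter_upwards [hz'] with y hy
        simp [hy]
      rw [hz2]
      exact zero_le
    · -- main case
      set r : ℝ := (I / M₀) ^ ((1:ℝ)/2) with hrdef
      have hr : 0 < r := Real.rpow_pos_of_pos (div_pos hI0' hM0') _
      have h1 : ∫⁻ y in Metric.ball x r, ENNReal.ofReal (θ y * ‖x - y‖ ^ (-(1+α))) ≤
          ENNReal.ofReal M₀ * ENNReal.ofReal (c0 * r ^ (1-α)) := by
        calc ∫⁻ y in Metric.ball x r, ENNReal.ofReal (θ y * ‖x - y‖ ^ (-(1+α)))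
            ≤ ∫⁻ y in Metric.ball x r,
              ENNReal.ofReal M₀ * ENNReal.ofReal (‖x - y‖ ^ (-(1+α))) := by
              apply lintegral_mono_ae
              filter_upwards [ae_restrict_of_ae hθM] with y hy
              rw [ENNReal.ofReal_mul (hpos y)]
              exact mul_le_mul_left (ENNReal.ofReal_le_ofReal hy) _
          _ = ENNReal.ofReal M₀ * ∫⁻ y in Metric.ball x r,
              ENNReal.ofReal (‖x - y‖ ^ (-(1+α))) := lintegral_const_mul _ hKmeas
          _ ≤ ENNReal.ofReal M₀ * ENNReal.ofReal (c0 * r ^ (1-α)) := by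
              apply mul_le_mul_right
              rw [hc0, div_mul_eq_mul_div, div_eq_mul_inv, mul_comm (π * 2 ^ (1+α) * r ^ (1-α))]
              rw [← mul_assoc]
              have := kernel_ball_lintegral hα0 hα1 x hr
              calc ∫⁻ y in Metric.ball x r, ENNReal.ofReal (‖x - y‖ ^ (-(1+α)))
                  ≤ ENNReal.ofReal (π * 2 ^ (1+α) / (1 - (2⁻¹:ℝ) ^ (1-α)) * r ^ (1-α)) := this
                _ = _ := by
                    rw [div_mul_eq_mul_div, div_eq_mul_inv, ← mul_assoc,
                      mul_comm _ ((1 - (2⁻¹:ℝ) ^ (1-α))⁻¹)]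
                    ring_nf
      have h2 : ∫⁻ y in S \ Metric.ball x r, ENNReal.ofReal (θ y * ‖x - y‖ ^ (-(1+α))) ≤
          ENNReal.ofReal (r ^ (-(1+α))) * ENNReal.ofReal I := by
        calc ∫⁻ y in S \ Metric.ball x r, ENNReal.ofReal (θ y * ‖x - y‖ ^ (-(1+α)))
            ≤ ∫⁻ y in S \ Metric.ball x r,
              ENNReal.ofReal (r ^ (-(1+α))) * ENNReal.ofReal (θ y) := by
              apply setLIntegral_mono (measurable_const.mul hmeas.ennreal_ofReal)
              intro y hy
              rw [ENNReal.ofReal_mul (hpos y), mul_comm]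
              apply mul_le_mul_left
              apply ENNReal.ofReal_le_ofReal
              have hry : r ≤ ‖x - y‖ := by
                have h3 := hy.2
                rw [Metric.mem_ball, not_lt, dist_eq_norm, norm_sub_rev] at h3
                exact h3
              exact Real.rpow_le_rpow_of_nonpos hr hry (by linarith)
          _ = ENNReal.ofReal (r ^ (-(1+α))) *
              ∫⁻ y in S \ Metric.ball x r, ENNReal.ofReal (θ y) :=
              lintegral_const_mul _ hmeas.ennreal_ofReal
          _ ≤ ENNReal.ofReal (r ^ (-(1+α))) * ENNReal.ofReal I := by
              apply mul_le_mul_right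
              calc ∫⁻ y in S \ Metric.ball x r, ENNReal.ofReal (θ y)
                  ≤ ∫⁻ y in T, ENNReal.ofReal (θ y) :=
                    lintegral_mono_set (diff_subset.trans hST)
                _ = ENNReal.ofReal I := hlintT
      calc ∫⁻ y in S, ENNReal.ofReal (θ y * ‖x - y‖ ^ (-(1+α)))
          ≤ ∫⁻ y in Metric.ball x r ∪ (S \ Metric.ball x r),
            ENNReal.ofReal (θ y * ‖x - y‖ ^ (-(1+α))) := by
            apply lintegral_mono_set
            intro y hy
            by_cases hb : y ∈ Metric.ball x r
            · exact Or.inl hb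
            · exact Or.inr ⟨hy, hb⟩
        _ ≤ (∫⁻ y in Metric.ball x r, ENNReal.ofReal (θ y * ‖x - y‖ ^ (-(1+α))))
            + ∫⁻ y in S \ Metric.ball x r, ENNReal.ofReal (θ y * ‖x - y‖ ^ (-(1+α))) :=
            lintegral_union_le _ _ _
        _ ≤ ENNReal.ofReal M₀ * ENNReal.ofReal (c0 * r ^ (1-α))
            + ENNReal.ofReal (r ^ (-(1+α))) * ENNReal.ofReal I := add_le_add h1 h2
        _ = ENNReal.ofReal (M₀ * (c0 * r ^ (1-α)) + r ^ (-(1+α)) * I) := by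
            rw [← ENNReal.ofReal_mul hM0, ← ENNReal.ofReal_mul (Real.rpow_nonneg hr.le _),
              ← ENNReal.ofReal_add (by positivity) (by positivity)]
        _ = ENNReal.ofReal ((c0+1) * M₀ ^ ((1+α)/2) * I ^ ((1-α)/2)) := by
            rw [hrdef, key_alg c0 hM0' hI0']
  have hLHS : ∫ y in S, θ y * ‖x - y‖ ^ (-(1+α))
      = (∫⁻ y in S, ENNReal.ofReal (θ y * ‖x - y‖ ^ (-(1+α)))).toReal :=
    integral_eq_lintegral_of_nonneg_ae (ae_of_all _ hf0) hfmeas.aestronglyMeasurable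
  calc ∫ y in S, θ y * ‖x - y‖ ^ (-(1+α))
      = (∫⁻ y in S, ENNReal.ofReal (θ y * ‖x - y‖ ^ (-(1+α)))).toReal := hLHS
    _ ≤ (c0+1) * M₀ ^ ((1+α)/2) * I ^ ((1-α)/2) :=
      ENNReal.toReal_le_of_le_ofReal hRHS0 main
end
end
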